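/- arXiv:2108.08673 — 5 statements merged into one kernel-verified Lean document; each statement's English description precedes it below -/
import Mathlib

section
/- For all nonnegative reals S₁, I₁, S₂, I₂, the incidence function satisfies |βS₁I₁/(1+k₁S₁+k₂I₁+k₃S₁I₁) − βS₂I₂/(1+k₁S₂+k₂I₂+k₃S₂I₂)| ≤ βI₂|S₁−S₂| + βS₁|I₁−I₂| + βk₁S₁S₂|I₁−I₂| + βk₂I₁I₂|S₁−S₂|. -/
theorem incidence_lipschitz_bound (β k₁ k₂ k₃ : ℝ) (hβ : 0 < β)
    (hk₁ : 0 ≤ k₁) (hk₂ : 0 ≤ k₂) (hk₃ : 0 ≤ k₃)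
    (S₁ I₁ S₂ I₂ : ℝ) (hS₁ : 0 ≤ S₁) (hI₁ : 0 ≤ I₁) (hS₂ : 0 ≤ S₂) (hI₂ : 0 ≤ I₂) :
    |β * S₁ * I₁ / (1 + k₁ * S₁ + k₂ * I₁ + k₃ * S₁ * I₁) -
      β * S₂ * I₂ / (1 + k₁ * S₂ + k₂ * I₂ + k₃ * S₂ * I₂)| ≤
      β * I₂ * |S₁ - S₂| + β * S₁ * |I₁ - I₂| + β * k₁ * S₁ * S₂ * |I₁ - I₂|
        + β * k₂ * I₁ * I₂ * |S₁ - S₂| := by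
  have hD₁ : (0:ℝ) < 1 + k₁ * S₁ + k₂ * I₁ + k₃ * S₁ * I₁ := by positivity
  have hD₂ : (0:ℝ) < 1 + k₁ * S₂ + k₂ * I₂ + k₃ * S₂ * I₂ := by positivity
  set A := β * I₂ * (S₁ - S₂) with hA
  set B := β * S₁ * (I₁ - I₂) with hB
  set C := β * k₁ * S₁ * S₂ * (I₁ - I₂) with hC
  set E := β * k₂ * I₁ * I₂ * (S₁ - S₂) with hE
  have key : β * S₁ * I₁ / (1 + k₁ * S₁ + k₂ * I₁ + k₃ * S₁ * I₁) -
      β * S₂ * I₂ / (1 + k₁ * S₂ + k₂ * I₂ + k₃ * S₂ * I₂)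
      = (A + B + C + E) / ((1 + k₁ * S₁ + k₂ * I₁ + k₃ * S₁ * I₁)
        * (1 + k₁ * S₂ + k₂ * I₂ + k₃ * S₂ * I₂)) := by
    rw [hA, hB, hC, hE]
    field_simp
    ring
  have hDD : (1:ℝ) ≤ (1 + k₁ * S₁ + k₂ * I₁ + k₃ * S₁ * I₁)
      * (1 + k₁ * S₂ + k₂ * I₂ + k₃ * S₂ * I₂) := by
    have e1 : (1:ℝ) ≤ 1 + k₁ * S₁ + k₂ * I₁ + k₃ * S₁ * I₁ := by
      have := mul_nonneg hk₁ hS₁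
      have := mul_nonneg hk₂ hI₁
      have := mul_nonneg (mul_nonneg hk₃ hS₁) hI₁
      linarith
    have e2 : (1:ℝ) ≤ 1 + k₁ * S₂ + k₂ * I₂ + k₃ * S₂ * I₂ := by
      have := mul_nonneg hk₁ hS₂
      have := mul_nonneg hk₂ hI₂
      have := mul_nonneg (mul_nonneg hk₃ hS₂) hI₂
      linarith
    nlinarith
  have htri : |A + B + C + E| ≤ |A| + |B| + |C| + |E| := by
    calc |A + B + C + E| ≤ |A + B + C| + |E| := abs_add_le _ _
      _ ≤ |A + B| + |C| + |E| := by linarith [abs_add_le (A + B) C]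
      _ ≤ |A| + |B| + |C| + |E| := by linarith [abs_add_le A B]
  have hAe : |A| = β * I₂ * |S₁ - S₂| := by
    rw [hA, abs_mul, abs_of_nonneg (by positivity : (0:ℝ) ≤ β * I₂)]
  have hBe : |B| = β * S₁ * |I₁ - I₂| := by
    rw [hB, abs_mul, abs_of_nonneg (by positivity : (0:ℝ) ≤ β * S₁)]
  have hCe : |C| = β * k₁ * S₁ * S₂ * |I₁ - I₂| := by
    rw [hC, abs_mul, abs_of_nonneg (by positivity : (0:ℝ) ≤ β * k₁ * S₁ * S₂)]
  have hEe : |E| = β * k₂ * I₁ * I₂ * |S₁ - S₂| := by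
    rw [hE, abs_mul, abs_of_nonneg (by positivity : (0:ℝ) ≤ β * k₂ * I₁ * I₂)]
  calc |β * S₁ * I₁ / (1 + k₁ * S₁ + k₂ * I₁ + k₃ * S₁ * I₁) -
      β * S₂ * I₂ / (1 + k₁ * S₂ + k₂ * I₂ + k₃ * S₂ * I₂)|
      = |A + B + C + E| / ((1 + k₁ * S₁ + k₂ * I₁ + k₃ * S₁ * I₁)
        * (1 + k₁ * S₂ + k₂ * I₂ + k₃ * S₂ * I₂)) := by
        have hpos : (0:ℝ) < (1 + k₁ * S₁ + k₂ * I₁ + k₃ * S₁ * I₁)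
          * (1 + k₁ * S₂ + k₂ * I₂ + k₃ * S₂ * I₂) := by positivity
        rw [key, abs_div, abs_of_pos hpos]
    _ ≤ |A + B + C + E| := div_le_self (abs_nonneg _) hDD
    _ ≤ |A| + |B| + |C| + |E| := htri
    _ = β * I₂ * |S₁ - S₂| + β * S₁ * |I₁ - I₂| + β * k₁ * S₁ * S₂ * |I₁ - I₂|
        + β * k₂ * I₁ * I₂ * |S₁ - S₂| := by rw [hAe, hBe, hCe, hEe]
end

section
/- Let X be a complete metric space of continuous functions Ω : [0,δ] → ℝ³ with Ω(0) = Ω₀, equipped with the sup-ℓ¹-norm, and let Θ be the Picard operator (ΘΩ)(t) = Ω₀ + ((1−α)/B(α))·F(Ω(t)) + (α/(B(α)Γ(α)))·∫₀ᵗ (t−p)^{α−1} F(Ω(p)) dp. If F is Lipschitz with constant L on the relevant set, then for all Ω₁, Ω₂ in X, ‖ΘΩ₁ − ΘΩ₂‖_∞ ≤ L((1−α)/B(α) + δ^α/(B(α)Γ(α)))·‖Ω₁ − Ω₂‖_∞. -/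
open Set MeasureTheory

/-- State space `ℝ³` with the `ℓ¹` norm. -/
noncomputable abbrev V := PiLp 1 (fun _ : Fin 3 => ℝ)

/-- The Picard operator associated with the ABC fractional SIRS integral equation. -/
noncomputable def picard (α B : ℝ) (Ω₀ : V) (F : V → V) (Ω : ℝ → V) (t : ℝ) : V :=
  Ω₀ + ((1 - α) / B) • F (Ω t)
    + (α / (B * Real.Gamma α)) • ∫ p in (0:ℝ)..t, ((t - p) ^ (α - 1)) • F (Ω p)

lemma picard_ptwise (α B δ L M : ℝ) (Ω₀ : V) (F : V → V)
    (hα : 0 < α) (hα1 : α < 1) (hB : 0 < B) (hδ : 0 < δ) (hL : 0 ≤ L)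
    (hLip : ∀ x y : V, ‖F x - F y‖ ≤ L * ‖x - y‖)
    (Ω₁ Ω₂ : ℝ → V)
    (hc₁ : ContinuousOn Ω₁ (Icc 0 δ)) (hc₂ : ContinuousOn Ω₂ (Icc 0 δ))
    (hM : ∀ s ∈ Icc (0:ℝ) δ, ‖Ω₁ s - Ω₂ s‖ ≤ M)
    (t : ℝ) (ht : t ∈ Icc (0:ℝ) δ) :
    ‖picard α B Ω₀ F Ω₁ t - picard α B Ω₀ F Ω₂ t‖ ≤
      L * ((1 - α) / B + δ ^ α / (B * Real.Gamma α)) * M := by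
  have hΓ : 0 < Real.Gamma α := Real.Gamma_pos_of_pos hα
  have h0t : (0:ℝ) ≤ t := ht.1
  have htδ : t ≤ δ := ht.2
  have hM0 : 0 ≤ M := le_trans (norm_nonneg _) (hM 0 ⟨le_rfl, hδ.le⟩)
  have hLM : 0 ≤ L * M := mul_nonneg hL hM0
  -- continuity of F
  have hFc : Continuous F := by
    have : LipschitzWith L.toNNReal F := by
      apply LipschitzWith.of_dist_le_mul
      intro x y
      simpa [dist_eq_norm, Real.coe_toNNReal L hL] using hLip x y
    exact this.continuous
  -- integrability of the kernel
  have hrpow : IntervalIntegrable (fun x : ℝ => x ^ (α - 1)) volume 0 t :=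
    intervalIntegral.intervalIntegrable_rpow' (by linarith)
  have hker : IntervalIntegrable (fun p : ℝ => (t - p) ^ (α - 1)) volume 0 t := by
    simpa using (hrpow.comp_sub_left t).symm
  have hkerIcc : IntegrableOn (fun p : ℝ => (t - p) ^ (α - 1)) (Icc 0 t) volume := by
    rw [integrableOn_Icc_iff_integrableOn_Ioc]
    exact (intervalIntegrable_iff_integrableOn_Ioc_of_le h0t).mp hker
  have hsub : Icc (0:ℝ) t ⊆ Icc 0 δ := Icc_subset_Icc le_rfl htδ
  have hint : ∀ (Ω : ℝ → V), ContinuousOn Ω (Icc 0 δ) →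
      IntervalIntegrable (fun p => ((t - p) ^ (α - 1)) • F (Ω p)) volume 0 t := by
    intro Ω hc
    rw [intervalIntegrable_iff_integrableOn_Ioc_of_le h0t]
    have hFΩ : ContinuousOn (fun p => F (Ω p)) (Icc 0 t) :=
      hFc.comp_continuousOn (hc.mono hsub)
    exact (hkerIcc.smul_continuousOn hFΩ isCompact_Icc).mono_set Ioc_subset_Icc_self
  have h1 := hint Ω₁ hc₁
  have h2 := hint Ω₂ hc₂
  -- the difference of the two Picard iterates
  have hdiff : picard α B Ω₀ F Ω₁ t - picard α B Ω₀ F Ω₂ t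
      = ((1 - α) / B) • (F (Ω₁ t) - F (Ω₂ t))
        + (α / (B * Real.Gamma α)) •
          ∫ p in (0:ℝ)..t, ((t - p) ^ (α - 1)) • (F (Ω₁ p) - F (Ω₂ p)) := by
    have : (∫ p in (0:ℝ)..t, ((t - p) ^ (α - 1)) • (F (Ω₁ p) - F (Ω₂ p)))
        = (∫ p in (0:ℝ)..t, ((t - p) ^ (α - 1)) • F (Ω₁ p))
          - ∫ p in (0:ℝ)..t, ((t - p) ^ (α - 1)) • F (Ω₂ p) := by
      simp_rw [smul_sub]
      exact intervalIntegral.integral_sub h1 h2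
    rw [picard, picard, this, smul_sub, smul_sub]
    abel
  -- bound the integral term
  have hkerconst : IntervalIntegrable (fun p : ℝ => (L * M) * (t - p) ^ (α - 1)) volume 0 t :=
    hker.const_mul _
  have hIbound : ‖∫ p in (0:ℝ)..t, ((t - p) ^ (α - 1)) • (F (Ω₁ p) - F (Ω₂ p))‖
      ≤ |∫ p in (0:ℝ)..t, (L * M) * (t - p) ^ (α - 1)| := by
    apply intervalIntegral.norm_integral_le_abs_of_norm_le _ hkerconst
    filter_upwards [ae_restrict_mem measurableSet_uIoc] with p hp
    rw [uIoc_of_le h0t] at hp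
    have hp0 : 0 ≤ t - p := by linarith [hp.2]
    have hpδ : p ∈ Icc (0:ℝ) δ := ⟨hp.1.le, le_trans hp.2 htδ⟩
    rw [norm_smul, Real.norm_eq_abs, abs_of_nonneg (Real.rpow_nonneg hp0 _), mul_comm]
    apply mul_le_mul_of_nonneg_right _ (Real.rpow_nonneg hp0 _)
    exact le_trans (hLip _ _) (mul_le_mul_of_nonneg_left (hM p hpδ) hL)
  have hIval : (∫ p in (0:ℝ)..t, (L * M) * (t - p) ^ (α - 1)) = (L * M) * (t ^ α / α) := by
    rw [intervalIntegral.integral_const_mul]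
    have hcomp : (∫ p in (0:ℝ)..t, (t - p) ^ (α - 1)) = ∫ x in (0:ℝ)..t, x ^ (α - 1) := by
      simpa using intervalIntegral.integral_comp_sub_left (a := 0) (b := t)
        (fun x : ℝ => x ^ (α - 1)) t
    rw [hcomp, integral_rpow (Or.inl (by linarith))]
    rw [sub_add_cancel, Real.zero_rpow hα.ne', sub_zero]
  -- putting everything together
  have hc₁n : 0 ≤ (1 - α) / B := div_nonneg (by linarith) hB.le
  have hc₂n : 0 ≤ α / (B * Real.Gamma α) := div_nonneg hα.le (by positivity)
  calc ‖picard α B Ω₀ F Ω₁ t - picard α B Ω₀ F Ω₂ t‖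
      ≤ ‖((1 - α) / B) • (F (Ω₁ t) - F (Ω₂ t))‖
        + ‖(α / (B * Real.Gamma α)) •
            ∫ p in (0:ℝ)..t, ((t - p) ^ (α - 1)) • (F (Ω₁ p) - F (Ω₂ p))‖ := by
        rw [hdiff]; exact norm_add_le _ _
    _ ≤ ((1 - α) / B) * (L * M)
        + (α / (B * Real.Gamma α)) * ((L * M) * (t ^ α / α)) := by
        rw [norm_smul, norm_smul, Real.norm_eq_abs, Real.norm_eq_abs,
          abs_of_nonneg hc₁n, abs_of_nonneg hc₂n]
        gcongr
        · exact le_trans (hLip _ _) (mul_le_mul_of_nonneg_left (hM t ht) hL)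
        · refine le_trans hIbound (le_of_eq ?_)
          rw [hIval, abs_of_nonneg]
          have : 0 ≤ t ^ α / α := div_nonneg (Real.rpow_nonneg h0t α) hα.le
          exact mul_nonneg hLM this
    _ ≤ ((1 - α) / B) * (L * M)
        + (α / (B * Real.Gamma α)) * ((L * M) * (δ ^ α / α)) := by
        have := Real.rpow_le_rpow h0t htδ hα.le
        gcongr
    _ = L * ((1 - α) / B + δ ^ α / (B * Real.Gamma α)) * M := by
        field_simp

theorem picard_operator_lipschitz (α B δ L : ℝ) (Ω₀ : V) (F : V → V)
    (hα : 0 < α) (hα1 : α < 1) (hB : 0 < B) (hδ : 0 < δ) (hL : 0 ≤ L)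
    (hLip : ∀ x y : V, ‖F x - F y‖ ≤ L * ‖x - y‖)
    (Ω₁ Ω₂ : ℝ → V)
    (hc₁ : ContinuousOn Ω₁ (Icc 0 δ)) (hc₂ : ContinuousOn Ω₂ (Icc 0 δ))
    (h0₁ : Ω₁ 0 = Ω₀) (h0₂ : Ω₂ 0 = Ω₀) :
    (⨆ t ∈ Icc (0:ℝ) δ, ‖picard α B Ω₀ F Ω₁ t - picard α B Ω₀ F Ω₂ t‖) ≤
      L * ((1 - α) / B + δ ^ α / (B * Real.Gamma α)) *
        ⨆ t ∈ Icc (0:ℝ) δ, ‖Ω₁ t - Ω₂ t‖ := by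
  have hΓ : 0 < Real.Gamma α := Real.Gamma_pos_of_pos hα
  obtain ⟨C, hC⟩ := isCompact_Icc.exists_bound_of_continuousOn (hc₁.sub hc₂)
  set M : ℝ := ⨆ t ∈ Icc (0:ℝ) δ, ‖Ω₁ t - Ω₂ t‖ with hMdef
  have hbdd : BddAbove (Set.range fun t => ⨆ _ : t ∈ Icc (0:ℝ) δ, ‖Ω₁ t - Ω₂ t‖) := by
    refine ⟨max C 0, ?_⟩
    rintro x ⟨t, rfl⟩
    exact Real.iSup_le (fun h => le_max_of_le_left (hC t h)) (le_max_right _ _)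
  have hM : ∀ s ∈ Icc (0:ℝ) δ, ‖Ω₁ s - Ω₂ s‖ ≤ M := by
    intro s hs
    have := le_ciSup hbdd s
    rwa [ciSup_pos hs] at this
  have hM0 : 0 ≤ M := le_trans (norm_nonneg _) (hM 0 ⟨le_rfl, hδ.le⟩)
  have hcoef : 0 ≤ L * ((1 - α) / B + δ ^ α / (B * Real.Gamma α)) * M := by
    apply mul_nonneg _ hM0
    apply mul_nonneg hL
    have h1 : 0 ≤ (1 - α) / B := div_nonneg (by linarith) hB.le
    have h2 : 0 ≤ δ ^ α / (B * Real.Gamma α) :=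
      div_nonneg (Real.rpow_nonneg hδ.le α) (by positivity)
    linarith
  apply Real.iSup_le _ hcoef
  intro t
  apply Real.iSup_le _ hcoef
  intro ht
  exact picard_ptwise α B δ L M Ω₀ F hα hα1 hB hδ hL hLip Ω₁ Ω₂ hc₁ hc₂ hM t ht
end

section
/- If ‖F(Ω)‖₁ ≤ N̄ for all Ω ∈ B(Ω₀,ρ) and δ > 0 satisfies ((1−α)/B(α))N̄ + (δ^α/(B(α)Γ(α)))N̄ ≤ ρ, then the Picard operator Θ maps W into itself, i.e., for every Ω ∈ W and every t ∈ [0,δ], ‖(ΘΩ)(t) − Ω₀‖₁ ≤ ρ. -/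
open Set MeasureTheory

theorem picard_maps_W_into_W (α B N ρ δ : ℝ) (Ω₀ : V) (F : V → V)
    (hα : 0 < α) (hα1 : α < 1) (hB : 0 < B) (hN : 0 < N) (hρ : 0 < ρ) (hδ : 0 < δ)
    (hFc : Continuous F)
    (hFb : ∀ x ∈ Metric.closedBall Ω₀ ρ, ‖F x‖ ≤ N)
    (hδρ : (1 - α) / B * N + δ ^ α / (B * Real.Gamma α) * N ≤ ρ)
    (Ω : ℝ → V) (hc : ContinuousOn Ω (Icc 0 δ)) (h0 : Ω 0 = Ω₀)
    (hball : ∀ t ∈ Icc (0:ℝ) δ, Ω t ∈ Metric.closedBall Ω₀ ρ) :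
    ∀ t ∈ Icc (0:ℝ) δ, ‖picard α B Ω₀ F Ω t - Ω₀‖ ≤ ρ := by
  intro t ht
  obtain ⟨ht0, htδ⟩ := ht
  have hΓ : 0 < Real.Gamma α := Real.Gamma_pos_of_pos hα
  have hFt : ∀ p ∈ Icc (0:ℝ) t, ‖F (Ω p)‖ ≤ N := fun p hp =>
    hFb _ (hball p ⟨hp.1, hp.2.trans htδ⟩)
  -- integrability of the weight
  have hint1 : IntervalIntegrable (fun p => (t - p) ^ (α - 1)) volume 0 t := by
    have h1 := (intervalIntegral.intervalIntegrable_rpow' (r := α - 1) (by linarith) :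
      IntervalIntegrable (fun x : ℝ => x ^ (α - 1)) volume 0 t).comp_sub_left t
    simpa using h1.symm
  -- integrability of the integrand
  have hcontF : ContinuousOn (fun p => F (Ω p)) (Icc 0 t) :=
    hFc.comp_continuousOn (hc.mono (Icc_subset_Icc le_rfl htδ))
  have hint2 : IntervalIntegrable (fun p => ((t - p) ^ (α - 1)) • F (Ω p)) volume 0 t := by
    rw [intervalIntegrable_iff_integrableOn_Icc_of_le ht0]
    exact ((intervalIntegrable_iff_integrableOn_Icc_of_le ht0).mp
      hint1).smul_continuousOn hcontF isCompact_Icc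
  -- bound the integral
  have hkey : ‖∫ p in (0:ℝ)..t, ((t - p) ^ (α - 1)) • F (Ω p)‖ ≤ N * (t ^ α / α) := by
    have h1 : ‖∫ p in (0:ℝ)..t, ((t - p) ^ (α - 1)) • F (Ω p)‖
        ≤ ∫ p in (0:ℝ)..t, ‖((t - p) ^ (α - 1)) • F (Ω p)‖ :=
      intervalIntegral.norm_integral_le_integral_norm ht0
    have h2 : (∫ p in (0:ℝ)..t, ‖((t - p) ^ (α - 1)) • F (Ω p)‖)
        ≤ ∫ p in (0:ℝ)..t, ((t - p) ^ (α - 1)) * N := by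
      apply intervalIntegral.integral_mono_on ht0 hint2.norm (hint1.mul_const N)
      intro p hp
      obtain ⟨hp1, hp2⟩ := hp
      have htp : (0:ℝ) ≤ t - p := by linarith
      have hw : (0:ℝ) ≤ (t - p) ^ (α - 1) := Real.rpow_nonneg htp _
      rw [norm_smul, Real.norm_rpow_of_nonneg htp, Real.norm_of_nonneg htp]
      exact mul_le_mul_of_nonneg_left (hFt p ⟨hp1, hp2⟩) hw
    have h3 : (∫ p in (0:ℝ)..t, ((t - p) ^ (α - 1)) * N)
        = (t ^ α / α) * N := by
      rw [intervalIntegral.integral_mul_const]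
      congr 1
      have := intervalIntegral.integral_comp_sub_left (a := (0:ℝ)) (b := t)
        (fun x : ℝ => x ^ (α - 1)) t
      simp only [sub_zero, sub_self] at this
      rw [this, integral_rpow (Or.inl (by linarith))]
      rw [sub_add_cancel, Real.zero_rpow hα.ne', sub_zero]
    calc ‖∫ p in (0:ℝ)..t, ((t - p) ^ (α - 1)) • F (Ω p)‖
        ≤ ∫ p in (0:ℝ)..t, ((t - p) ^ (α - 1)) * N := h1.trans h2
      _ = (t ^ α / α) * N := h3
      _ = N * (t ^ α / α) := mul_comm _ _
  -- put everything together
  have hFt0 : ‖F (Ω t)‖ ≤ N := hFt t ⟨ht0, le_rfl⟩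
  have htα : t ^ α ≤ δ ^ α := Real.rpow_le_rpow ht0 htδ hα.le
  have hBΓ : 0 < B * Real.Gamma α := mul_pos hB hΓ
  have hnorm : ‖picard α B Ω₀ F Ω t - Ω₀‖
      ≤ ((1 - α) / B) * ‖F (Ω t)‖
        + (α / (B * Real.Gamma α)) * ‖∫ p in (0:ℝ)..t, ((t - p) ^ (α - 1)) • F (Ω p)‖ := by
    unfold picard
    have : Ω₀ + ((1 - α) / B) • F (Ω t)
        + (α / (B * Real.Gamma α)) • (∫ p in (0:ℝ)..t, ((t - p) ^ (α - 1)) • F (Ω p)) - Ω₀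
        = ((1 - α) / B) • F (Ω t)
        + (α / (B * Real.Gamma α)) • (∫ p in (0:ℝ)..t, ((t - p) ^ (α - 1)) • F (Ω p)) := by
      abel
    rw [this]
    refine (norm_add_le _ _).trans ?_
    rw [norm_smul, norm_smul,
      Real.norm_of_nonneg (div_nonneg (by linarith) hB.le : (0:ℝ) ≤ (1 - α) / B),
      Real.norm_of_nonneg (by positivity : (0:ℝ) ≤ α / (B * Real.Gamma α))]
  refine hnorm.trans (le_trans ?_ hδρ)
  have h4 : (α / (B * Real.Gamma α)) * (N * (t ^ α / α))
      = t ^ α / (B * Real.Gamma α) * N := by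
    field_simp
  calc ((1 - α) / B) * ‖F (Ω t)‖
        + (α / (B * Real.Gamma α)) * ‖∫ p in (0:ℝ)..t, ((t - p) ^ (α - 1)) • F (Ω p)‖
      ≤ ((1 - α) / B) * N + (α / (B * Real.Gamma α)) * (N * (t ^ α / α)) := by
        gcongr
      _ = (1 - α) / B * N + t ^ α / (B * Real.Gamma α) * N := by rw [h4]
      _ ≤ (1 - α) / B * N + δ ^ α / (B * Real.Gamma α) * N := by gcongr
end

section
/- Let (X, ‖·‖) be a Banach space and Θ : X → X a self-map satisfying ‖Θx − Θy‖ ≤ K‖Θx − x‖ + k‖x − y‖ for all x, y ∈ X, where K ≥ 0 and 0 ≤ k < 1. Suppose Θ has a fixed point p. Then Θ is Picard-stable: for any bounded sequence {xₙ} in X, if ‖x_{n+1} − Θxₙ‖ → 0 as n → ∞, then xₙ → p. -/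
open Filter

lemma aux_rec (a e : ℕ → ℝ) (ha : ∀ n, 0 ≤ a n) (k : ℝ) (hk0 : 0 ≤ k) (hk1 : k < 1)
    (hrec : ∀ n, a (n + 1) ≤ k * a n + e n) (he : Tendsto e atTop (nhds 0)) :
    Tendsto a atTop (nhds 0) := by
  rw [Metric.tendsto_atTop]
  intro ε hε
  have h1k : 0 < 1 - k := by linarith
  set δ := ε * (1 - k) / 2 with hδdef
  have hδ : 0 < δ := by positivity
  have hδk : δ / (1 - k) = ε / 2 := by field_simp [hδdef]; ring
  obtain ⟨N, hN⟩ := (Metric.tendsto_atTop.mp he) δ hδ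
  have key : ∀ m, a (N + m) ≤ k ^ m * a N + ε / 2 := by
    intro m
    induction m with
    | zero => simp; linarith
    | succ m ih =>
      have h1 := hrec (N + m)
      have h2 : |e (N + m) - 0| < δ := by
        simpa [Real.dist_eq] using hN (N + m) (Nat.le_add_right N m)
      have h3 : e (N + m) < δ := by
        rw [sub_zero] at h2; exact lt_of_abs_lt h2
      have h4 : a (N + (m + 1)) ≤ k * (k ^ m * a N + ε / 2) + δ := by
        have : a (N + (m + 1)) = a (N + m + 1) := by ring_nf
        rw [this]
        calc a (N + m + 1) ≤ k * a (N + m) + e (N + m) := h1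
          _ ≤ k * (k ^ m * a N + ε / 2) + δ := by
              have := mul_le_mul_of_nonneg_left ih hk0
              linarith
      have h5 : k * (ε / 2) + δ ≤ ε / 2 := by
        rw [← hδk]
        have : k * (δ / (1 - k)) + δ = δ / (1 - k) := by field_simp; ring
        linarith [this.le]
      calc a (N + (m + 1)) ≤ k * (k ^ m * a N + ε / 2) + δ := h4
        _ = k ^ (m + 1) * a N + (k * (ε / 2) + δ) := by ring
        _ ≤ k ^ (m + 1) * a N + ε / 2 := by linarith
  -- choose M with k^M * a N < ε/2
  have hpow : Tendsto (fun m => k ^ m * a N) atTop (nhds 0) := by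
    simpa using (tendsto_pow_atTop_nhds_zero_of_lt_one hk0 hk1).mul_const (a N)
  obtain ⟨M, hM⟩ := (Metric.tendsto_atTop.mp hpow) (ε / 2) (by linarith)
  refine ⟨N + M, fun n hn => ?_⟩
  have hm : n = N + (n - N) := by omega
  have hmM : M ≤ n - N := by omega
  have h6 : k ^ (n - N) * a N < ε / 2 := by
    have := hM (n - N) hmM
    rw [Real.dist_eq, sub_zero] at this
    exact lt_of_abs_lt this
  have h7 : a n ≤ k ^ (n - N) * a N + ε / 2 := by
    have := key (n - N); rwa [← hm] at this
  rw [Real.dist_eq, sub_zero, abs_of_nonneg (ha n)]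
  linarith

theorem theta_stable {X : Type*} [NormedAddCommGroup X] [NormedSpace ℝ X] [CompleteSpace X]
    (Θ : X → X) (K k : ℝ) (hK : 0 ≤ K) (hk0 : 0 ≤ k) (hk1 : k < 1)
    (hΘ : ∀ x y : X, ‖Θ x - Θ y‖ ≤ K * ‖Θ x - x‖ + k * ‖x - y‖)
    (p : X) (hp : Θ p = p)
    (x : ℕ → X) (hbdd : ∃ M : ℝ, ∀ n, ‖x n‖ ≤ M)
    (herr : Filter.Tendsto (fun n => ‖x (n + 1) - Θ (x n)‖) Filter.atTop (nhds 0)) :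
    Filter.Tendsto x Filter.atTop (nhds p) := by
  rw [tendsto_iff_norm_sub_tendsto_zero]
  apply aux_rec _ _ (fun n => norm_nonneg _) k hk0 hk1 _ herr
  intro n
  have h1 : ‖Θ p - Θ (x n)‖ ≤ K * ‖Θ p - p‖ + k * ‖p - x n‖ := hΘ p (x n)
  rw [hp, sub_self, norm_zero, mul_zero, zero_add] at h1
  calc ‖x (n + 1) - p‖ = ‖(x (n + 1) - Θ (x n)) + (Θ (x n) - p)‖ := by rw [sub_add_sub_cancel]
    _ ≤ ‖x (n + 1) - Θ (x n)‖ + ‖Θ (x n) - p‖ := norm_add_le _ _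
    _ ≤ k * ‖x n - p‖ + ‖x (n + 1) - Θ (x n)‖ := by
        rw [← norm_sub_rev (Θ (x n)) p, ← norm_sub_rev (x n) p] at h1
        linarith
end

section
/- The Picard operator Θ of the fractional SIRS iterative scheme satisfies ‖Θ(Ωₙ) − Θ(Ω_m)‖_W ≤ L((1−α)/B(α) + δ^α/(B(α)Γ(α)))‖Ωₙ − Ω_m‖_W for any two functions Ωₙ, Ω_m ∈ W; hence if L((1−α)/B(α) + δ^α/(B(α)Γ(α))) < 1, the iterative scheme is Θ-stable (Picard-stable). -/
open Set MeasureTheory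

lemma norm_sub_le₃ (a b c : V) : ‖a - b‖ ≤ ‖a - c‖ + ‖b - c‖ := by
  have := norm_sub_le_norm_sub_add_norm_sub a c b
  rwa [norm_sub_rev c b] at this

/-! ### Auxiliary lemmas about real-valued bounded suprema -/

lemma bsup_le' {s : Set ℝ} {f : ℝ → ℝ} {C : ℝ} (hC : 0 ≤ C) (h : ∀ t ∈ s, f t ≤ C) :
    (⨆ t ∈ s, f t) ≤ C :=
  Real.iSup_le (fun t => Real.iSup_le (fun ht => h t ht) hC) hC

lemma le_bsup' {s : Set ℝ} {f : ℝ → ℝ} {C : ℝ} (hC : 0 ≤ C) (h : ∀ t ∈ s, f t ≤ C)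
    {t : ℝ} (ht : t ∈ s) : f t ≤ ⨆ u ∈ s, f u := by
  have hb : BddAbove (Set.range fun u => ⨆ _ : u ∈ s, f u) := by
    refine ⟨C, ?_⟩
    rintro x ⟨u, rfl⟩
    exact Real.iSup_le (fun hu => h u hu) hC
  have h1 : f t ≤ ⨆ _ : t ∈ s, f t :=
    le_ciSup (f := fun _ : t ∈ s => f t) ⟨f t, by rintro x ⟨_, rfl⟩; exact le_rfl⟩ ht
  exact h1.trans (le_ciSup hb t)

/-! ### Integrability of the fractional kernel against a bounded measurable function -/

lemma kernel_intervalIntegrable {α t : ℝ} (hα : 0 < α) (ht : 0 ≤ t) :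
    IntervalIntegrable (fun p => (t - p) ^ (α - 1)) MeasureTheory.volume 0 t := by
  have h := (intervalIntegral.intervalIntegrable_rpow'
      (show (-1:ℝ) < α - 1 by linarith) (a := 0) (b := t)).comp_sub_left t
  simp only [sub_zero, sub_self] at h
  exact h.symm

lemma integrable_kernel_smul {α t : ℝ} (hα : 0 < α) (ht : 0 ≤ t)
    (G : ℝ → V) (hG : AEStronglyMeasurable G (volume.restrict (Ioc 0 t)))
    (C : ℝ) (hGC : ∀ p ∈ Ioc (0:ℝ) t, ‖G p‖ ≤ C) :
    IntervalIntegrable (fun p => ((t - p) ^ (α - 1)) • G p) MeasureTheory.volume 0 t := by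
  rw [intervalIntegrable_iff_integrableOn_Ioc_of_le ht]
  have hker : IntegrableOn (fun p => (t - p) ^ (α - 1)) (Ioc 0 t) volume :=
    (intervalIntegrable_iff_integrableOn_Ioc_of_le ht).mp (kernel_intervalIntegrable hα ht)
  have hmeas : AEStronglyMeasurable (fun p => ((t - p) ^ (α - 1)) • G p)
      (volume.restrict (Ioc 0 t)) := by
    refine (show AEStronglyMeasurable (fun p : ℝ => (t - p) ^ (α - 1)) (volume.restrict (Ioc 0 t)) from ?_).smul hG
    have : Measurable fun p : ℝ => (t - p) ^ (α - 1) := by fun_prop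
    exact this.aestronglyMeasurable
  refine Integrable.mono' (g := fun p => (t - p) ^ (α - 1) * max C 0) (hker.mul_const _)
    hmeas ?_
  filter_upwards [ae_restrict_mem measurableSet_Ioc] with p hp
  rw [norm_smul]
  have h1 : (0:ℝ) ≤ (t - p) ^ (α - 1) := Real.rpow_nonneg (by linarith [hp.2]) _
  rw [Real.norm_eq_abs, abs_of_nonneg h1]
  exact mul_le_mul_of_nonneg_left ((hGC p hp).trans (le_max_left _ _)) h1

/-! ### The basic contraction estimate, pointwise in `t` -/

lemma picard_key (α B δ L ρ : ℝ) (Ω₀ : V) (F : V → V)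
    (hα : 0 < α) (hα1 : α < 1) (hB : 0 < B) (hδ : 0 < δ) (hL : 0 ≤ L) (hρ : 0 < ρ)
    (hLip : ∀ x ∈ Metric.closedBall Ω₀ ρ, ∀ y ∈ Metric.closedBall Ω₀ ρ,
      ‖F x - F y‖ ≤ L * ‖x - y‖)
    (Ω₁ Ω₂ : ℝ → V) (h₁c : ContinuousOn Ω₁ (Icc 0 δ))
    (h₁b : ∀ t ∈ Icc (0:ℝ) δ, Ω₁ t ∈ Metric.closedBall Ω₀ ρ)
    (h₂c : ContinuousOn Ω₂ (Icc 0 δ))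
    (h₂b : ∀ t ∈ Icc (0:ℝ) δ, Ω₂ t ∈ Metric.closedBall Ω₀ ρ)
    {t : ℝ} (ht : t ∈ Icc (0:ℝ) δ) :
    ‖picard α B Ω₀ F Ω₁ t - picard α B Ω₀ F Ω₂ t‖ ≤
      L * ((1 - α) / B + δ ^ α / (B * Real.Gamma α)) *
        (⨆ u ∈ Icc (0:ℝ) δ, ‖Ω₁ u - Ω₂ u‖) := by
  have hΓ : 0 < Real.Gamma α := Real.Gamma_pos_of_pos hα
  set M : ℝ := ⨆ u ∈ Icc (0:ℝ) δ, ‖Ω₁ u - Ω₂ u‖ with hMdef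
  have h2ρ : ∀ u ∈ Icc (0:ℝ) δ, ‖Ω₁ u - Ω₂ u‖ ≤ 2 * ρ := by
    intro u hu
    have hb1 := mem_closedBall_iff_norm.mp (h₁b u hu)
    have hb2 := mem_closedBall_iff_norm.mp (h₂b u hu)
    calc ‖Ω₁ u - Ω₂ u‖ ≤ ‖Ω₁ u - Ω₀‖ + ‖Ω₂ u - Ω₀‖ := norm_sub_le₃ _ _ _
      _ ≤ 2 * ρ := by linarith
  have hMle : ∀ u ∈ Icc (0:ℝ) δ, ‖Ω₁ u - Ω₂ u‖ ≤ M :=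
    fun u hu => le_bsup' (by positivity) h2ρ hu
  have hM0 : 0 ≤ M := (norm_nonneg _).trans (hMle 0 ⟨le_rfl, hδ.le⟩)
  have hD : ∀ u ∈ Icc (0:ℝ) δ, ‖F (Ω₁ u) - F (Ω₂ u)‖ ≤ L * M := fun u hu =>
    (hLip _ (h₁b u hu) _ (h₂b u hu)).trans (mul_le_mul_of_nonneg_left (hMle u hu) hL)
  -- continuity of F on the ball
  have hFc : ContinuousOn F (Metric.closedBall Ω₀ ρ) := by
    refine (LipschitzOnWith.of_dist_le_mul (K := L.toNNReal) ?_).continuousOn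
    intro x hx y hy
    rw [dist_eq_norm, dist_eq_norm, Real.coe_toNNReal L hL]
    exact hLip x hx y hy
  have hsub : Ioc (0:ℝ) t ⊆ Icc (0:ℝ) δ := fun p hp => ⟨hp.1.le, hp.2.trans ht.2⟩
  have hmeas : ∀ (Ω : ℝ → V), ContinuousOn Ω (Icc 0 δ) →
      (∀ u ∈ Icc (0:ℝ) δ, Ω u ∈ Metric.closedBall Ω₀ ρ) →
      AEStronglyMeasurable (fun p => F (Ω p)) (volume.restrict (Ioc 0 t)) := by
    intro Ω hc hb
    refine ContinuousOn.aestronglyMeasurable ?_ measurableSet_Ioc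
    exact (hFc.comp (hc.mono hsub) (fun p hp => hb p (hsub hp)))
  have hFbound : ∀ (Ω : ℝ → V), (∀ u ∈ Icc (0:ℝ) δ, Ω u ∈ Metric.closedBall Ω₀ ρ) →
      ∀ p ∈ Ioc (0:ℝ) t, ‖F (Ω p)‖ ≤ L * ρ + ‖F Ω₀‖ := by
    intro Ω hb p hp
    have h0 : Ω₀ ∈ Metric.closedBall Ω₀ ρ := Metric.mem_closedBall_self hρ.le
    have := hLip _ (hb p (hsub hp)) _ h0
    have hn : ‖Ω p - Ω₀‖ ≤ ρ := mem_closedBall_iff_norm.mp (hb p (hsub hp))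
    calc ‖F (Ω p)‖ = ‖(F (Ω p) - F Ω₀) + F Ω₀‖ := by rw [sub_add_cancel]
      _ ≤ ‖F (Ω p) - F Ω₀‖ + ‖F Ω₀‖ := norm_add_le _ _
      _ ≤ L * ρ + ‖F Ω₀‖ := by nlinarith [norm_nonneg (Ω p - Ω₀)]
  have hI₁ : IntervalIntegrable (fun p => ((t - p) ^ (α - 1)) • F (Ω₁ p)) volume 0 t :=
    integrable_kernel_smul hα ht.1 _ (hmeas Ω₁ h₁c h₁b) _ (hFbound Ω₁ h₁b)
  have hI₂ : IntervalIntegrable (fun p => ((t - p) ^ (α - 1)) • F (Ω₂ p)) volume 0 t :=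
    integrable_kernel_smul hα ht.1 _ (hmeas Ω₂ h₂c h₂b) _ (hFbound Ω₂ h₂b)
  -- split the difference
  have hsplit : picard α B Ω₀ F Ω₁ t - picard α B Ω₀ F Ω₂ t =
      ((1 - α) / B) • (F (Ω₁ t) - F (Ω₂ t)) +
        (α / (B * Real.Gamma α)) •
          ∫ p in (0:ℝ)..t, ((t - p) ^ (α - 1)) • (F (Ω₁ p) - F (Ω₂ p)) := by
    have e1 : (∫ p in (0:ℝ)..t, ((t - p) ^ (α - 1)) • (F (Ω₁ p) - F (Ω₂ p))) =
        (∫ p in (0:ℝ)..t, ((t - p) ^ (α - 1)) • F (Ω₁ p)) -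
          ∫ p in (0:ℝ)..t, ((t - p) ^ (α - 1)) • F (Ω₂ p) := by
      rw [← intervalIntegral.integral_sub hI₁ hI₂]
      congr 1
      ext p
      rw [smul_sub]
    rw [picard, picard, e1, smul_sub, smul_sub]
    abel
  have hc₁ : (0:ℝ) ≤ (1 - α) / B := div_nonneg (by linarith) hB.le
  have hc₂ : (0:ℝ) ≤ α / (B * Real.Gamma α) := div_nonneg hα.le (mul_pos hB hΓ).le
  -- value of the kernel integral
  have hIcalc : ∫ p in (0:ℝ)..t, (t - p) ^ (α - 1) = t ^ α / α := by
    have := intervalIntegral.integral_comp_sub_left (a := 0) (b := t)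
      (fun x => x ^ (α - 1)) t
    simp only [sub_self, sub_zero] at this
    rw [this, integral_rpow (Or.inl (by linarith))]
    rw [sub_add_cancel, Real.zero_rpow hα.ne']
    ring
  -- bound the integral term
  have hintle : ‖∫ p in (0:ℝ)..t, ((t - p) ^ (α - 1)) • (F (Ω₁ p) - F (Ω₂ p))‖ ≤
      t ^ α / α * (L * M) := by
    have h1 := intervalIntegral.norm_integral_le_integral_norm
      (f := fun p => ((t - p) ^ (α - 1)) • (F (Ω₁ p) - F (Ω₂ p))) (μ := volume) ht.1
    refine h1.trans ?_
    have h2 : ∫ p in (0:ℝ)..t, ‖((t - p) ^ (α - 1)) • (F (Ω₁ p) - F (Ω₂ p))‖ ≤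
        ∫ p in (0:ℝ)..t, (t - p) ^ (α - 1) * (L * M) := by
      rw [intervalIntegral.integral_of_le ht.1, intervalIntegral.integral_of_le ht.1]
      refine integral_mono_of_nonneg (Filter.Eventually.of_forall fun p => norm_nonneg _)
        (((intervalIntegrable_iff_integrableOn_Ioc_of_le ht.1).mp
          (kernel_intervalIntegrable hα ht.1)).mul_const _) ?_
      filter_upwards [ae_restrict_mem measurableSet_Ioc] with p hp
      rw [norm_smul, Real.norm_eq_abs,
        abs_of_nonneg (Real.rpow_nonneg (by linarith [hp.2]) _)]
      exact mul_le_mul_of_nonneg_left (hD p (hsub hp))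
        (Real.rpow_nonneg (by linarith [hp.2]) _)
    refine h2.trans ?_
    rw [intervalIntegral.integral_mul_const, hIcalc]
  -- assemble
  rw [hsplit]
  have hLM : 0 ≤ L * M := mul_nonneg hL hM0
  have htα : t ^ α ≤ δ ^ α := Real.rpow_le_rpow ht.1 ht.2 hα.le
  have htα0 : 0 ≤ t ^ α := Real.rpow_nonneg ht.1 _
  calc ‖((1 - α) / B) • (F (Ω₁ t) - F (Ω₂ t)) +
        (α / (B * Real.Gamma α)) •
          ∫ p in (0:ℝ)..t, ((t - p) ^ (α - 1)) • (F (Ω₁ p) - F (Ω₂ p))‖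
      ≤ ((1 - α) / B) * ‖F (Ω₁ t) - F (Ω₂ t)‖ + (α / (B * Real.Gamma α)) *
          ‖∫ p in (0:ℝ)..t, ((t - p) ^ (α - 1)) • (F (Ω₁ p) - F (Ω₂ p))‖ := by
        refine (norm_add_le _ _).trans ?_
        rw [norm_smul, norm_smul, Real.norm_eq_abs, Real.norm_eq_abs,
          abs_of_nonneg hc₁, abs_of_nonneg hc₂]
    _ ≤ ((1 - α) / B) * (L * M) + (α / (B * Real.Gamma α)) * (t ^ α / α * (L * M)) := by
        have := hD t ht
        gcongr
    _ = ((1 - α) / B) * (L * M) + t ^ α / (B * Real.Gamma α) * (L * M) := by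
        field_simp
    _ ≤ ((1 - α) / B) * (L * M) + δ ^ α / (B * Real.Gamma α) * (L * M) := by
        gcongr
    _ = L * ((1 - α) / B + δ ^ α / (B * Real.Gamma α)) * M := by ring

/-! ### A convergence lemma for the recursion `a (n+1) ≤ k * a n + b n` -/

lemma tendsto_rec (a b : ℕ → ℝ) (k : ℝ) (hk0 : 0 ≤ k) (hk1 : k < 1)
    (ha : ∀ n, 0 ≤ a n) (hrec : ∀ n, a (n + 1) ≤ k * a n + b n)
    (hb : Filter.Tendsto b Filter.atTop (nhds 0)) :
    Filter.Tendsto a Filter.atTop (nhds 0) := by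
  rw [Metric.tendsto_atTop]
  intro ε hε
  have hε2 : 0 < (1 - k) * (ε / 2) := mul_pos (by linarith) (by linarith)
  obtain ⟨N, hN⟩ := (Metric.tendsto_atTop.mp hb) _ hε2
  have hNb : ∀ n ≥ N, b n ≤ (1 - k) * (ε / 2) := by
    intro n hn
    have := hN n hn
    rw [Real.dist_eq, sub_zero] at this
    exact (le_abs_self _).trans this.le
  have hkey : ∀ m, a (N + m) ≤ k ^ m * a N + ε / 2 := by
    intro m
    induction m with
    | zero => simp; linarith [hε]
    | succ m ih =>
      have h1 := hrec (N + m)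
      have h2 := hNb (N + m) (Nat.le_add_right N m)
      have h3 : k * a (N + m) ≤ k * (k ^ m * a N + ε / 2) :=
        mul_le_mul_of_nonneg_left ih hk0
      have : a (N + (m + 1)) ≤ k * (k ^ m * a N + ε / 2) + (1 - k) * (ε / 2) := by
        rw [show N + (m + 1) = (N + m) + 1 by ring]
        linarith
      calc a (N + (m + 1)) ≤ k * (k ^ m * a N + ε / 2) + (1 - k) * (ε / 2) := this
        _ = k ^ (m + 1) * a N + ε / 2 := by ring
  have hpow : Filter.Tendsto (fun m => k ^ m * a N) Filter.atTop (nhds 0) := by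
    have := (tendsto_pow_atTop_nhds_zero_of_lt_one hk0 hk1).mul_const (a N)
    simpa using this
  obtain ⟨M, hM⟩ := Filter.eventually_atTop.mp
    (hpow.eventually_lt_const (show (0:ℝ) < ε / 2 by positivity))
  refine ⟨N + M, fun n hn => ?_⟩
  have hNn : N ≤ n := le_trans (Nat.le_add_right N M) hn
  have hMn : M ≤ n - N := by omega
  have h1 := hkey (n - N)
  rw [Nat.add_sub_cancel' hNn] at h1
  have h2 := hM _ hMn
  rw [Real.dist_eq, sub_zero, abs_of_nonneg (ha n)]
  linarith

theorem picard_scheme_theta_stable (α B δ L ρ : ℝ) (Ω₀ : V) (F : V → V)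
    (hα : 0 < α) (hα1 : α < 1) (hB : 0 < B) (hδ : 0 < δ) (hL : 0 ≤ L) (hρ : 0 < ρ)
    (hLip : ∀ x ∈ Metric.closedBall Ω₀ ρ, ∀ y ∈ Metric.closedBall Ω₀ ρ,
      ‖F x - F y‖ ≤ L * ‖x - y‖) :
    (∀ Ω₁ Ω₂ : ℝ → V,
      ContinuousOn Ω₁ (Icc 0 δ) → Ω₁ 0 = Ω₀ →
        (∀ t ∈ Icc (0:ℝ) δ, Ω₁ t ∈ Metric.closedBall Ω₀ ρ) →
      ContinuousOn Ω₂ (Icc 0 δ) → Ω₂ 0 = Ω₀ →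
        (∀ t ∈ Icc (0:ℝ) δ, Ω₂ t ∈ Metric.closedBall Ω₀ ρ) →
      (⨆ t ∈ Icc (0:ℝ) δ, ‖picard α B Ω₀ F Ω₁ t - picard α B Ω₀ F Ω₂ t‖) ≤
        L * ((1 - α) / B + δ ^ α / (B * Real.Gamma α)) *
          ⨆ t ∈ Icc (0:ℝ) δ, ‖Ω₁ t - Ω₂ t‖) ∧
    (L * ((1 - α) / B + δ ^ α / (B * Real.Gamma α)) < 1 →
      ∀ p : ℝ → V, ContinuousOn p (Icc 0 δ) → p 0 = Ω₀ →
        (∀ t ∈ Icc (0:ℝ) δ, p t ∈ Metric.closedBall Ω₀ ρ) →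
        (∀ t ∈ Icc (0:ℝ) δ, picard α B Ω₀ F p t = p t) →
      ∀ x : ℕ → (ℝ → V),
        (∀ n, ContinuousOn (x n) (Icc 0 δ) ∧ x n 0 = Ω₀ ∧
          ∀ t ∈ Icc (0:ℝ) δ, x n t ∈ Metric.closedBall Ω₀ ρ) →
        Filter.Tendsto
          (fun n => ⨆ t ∈ Icc (0:ℝ) δ, ‖x (n + 1) t - picard α B Ω₀ F (x n) t‖)
          Filter.atTop (nhds 0) →
        Filter.Tendsto (fun n => ⨆ t ∈ Icc (0:ℝ) δ, ‖x n t - p t‖)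
          Filter.atTop (nhds 0)) := by
  have hΓ : 0 < Real.Gamma α := Real.Gamma_pos_of_pos hα
  have hknn : 0 ≤ L * ((1 - α) / B + δ ^ α / (B * Real.Gamma α)) := by
    have h1 : (0:ℝ) ≤ (1 - α) / B := div_nonneg (by linarith) hB.le
    have h2 : (0:ℝ) ≤ δ ^ α / (B * Real.Gamma α) :=
      div_nonneg (Real.rpow_nonneg hδ.le α) (mul_pos hB hΓ).le
    exact mul_nonneg hL (by linarith)
  -- bounds and nonnegativity of sups of differences of ball-valued functions
  have h2ρ : ∀ (f g : ℝ → V), (∀ t ∈ Icc (0:ℝ) δ, f t ∈ Metric.closedBall Ω₀ ρ) →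
      (∀ t ∈ Icc (0:ℝ) δ, g t ∈ Metric.closedBall Ω₀ ρ) →
      ∀ t ∈ Icc (0:ℝ) δ, ‖f t - g t‖ ≤ 2 * ρ := by
    intro f g hf hg t htt
    have hb1 := mem_closedBall_iff_norm.mp (hf t htt)
    have hb2 := mem_closedBall_iff_norm.mp (hg t htt)
    calc ‖f t - g t‖ ≤ ‖f t - Ω₀‖ + ‖g t - Ω₀‖ := norm_sub_le₃ _ _ _
      _ ≤ 2 * ρ := by linarith
  constructor
  · intro Ω₁ Ω₂ h1c h10 h1b h2c h20 h2b
    have hM0 : 0 ≤ ⨆ t ∈ Icc (0:ℝ) δ, ‖Ω₁ t - Ω₂ t‖ :=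
      (norm_nonneg _).trans (le_bsup' (by positivity) (h2ρ Ω₁ Ω₂ h1b h2b)
        (⟨le_rfl, hδ.le⟩ : (0:ℝ) ∈ Icc (0:ℝ) δ))
    refine bsup_le' (mul_nonneg hknn hM0) ?_
    intro t htt
    exact picard_key α B δ L ρ Ω₀ F hα hα1 hB hδ hL hρ hLip Ω₁ Ω₂ h1c h1b h2c h2b htt
  · intro hk p pc p0 pb pfix x hx hconv
    set k : ℝ := L * ((1 - α) / B + δ ^ α / (B * Real.Gamma α)) with hkdef
    set a : ℕ → ℝ := fun n => ⨆ t ∈ Icc (0:ℝ) δ, ‖x n t - p t‖ with hadef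
    set b : ℕ → ℝ := fun n => ⨆ t ∈ Icc (0:ℝ) δ, ‖x (n + 1) t - picard α B Ω₀ F (x n) t‖
      with hbdef
    have haub : ∀ n, ∀ t ∈ Icc (0:ℝ) δ, ‖x n t - p t‖ ≤ 2 * ρ :=
      fun n => h2ρ (x n) p (hx n).2.2 pb
    have hale : ∀ n, ∀ t ∈ Icc (0:ℝ) δ, ‖x n t - p t‖ ≤ a n :=
      fun n t htt => le_bsup' (by positivity) (haub n) htt
    have ha0 : ∀ n, 0 ≤ a n := fun n =>
      (norm_nonneg _).trans (hale n 0 ⟨le_rfl, hδ.le⟩)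
    have haB : ∀ n, a n ≤ 2 * ρ := fun n => bsup_le' (by positivity) (haub n)
    -- pointwise contraction: ‖Θ(x n) t − p t‖ ≤ k * a n
    have hcontr : ∀ n, ∀ t ∈ Icc (0:ℝ) δ, ‖picard α B Ω₀ F (x n) t - p t‖ ≤ k * a n := by
      intro n t htt
      have := picard_key α B δ L ρ Ω₀ F hα hα1 hB hδ hL hρ hLip (x n) p
        (hx n).1 (hx n).2.2 pc pb htt
      rwa [pfix t htt] at this
    -- bound for b's integrand, needed to invoke le_bsup'
    have hbub : ∀ n, ∀ t ∈ Icc (0:ℝ) δ,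
        ‖x (n + 1) t - picard α B Ω₀ F (x n) t‖ ≤ 2 * ρ + k * (2 * ρ) := by
      intro n t htt
      have h1 : ‖x (n + 1) t - p t‖ ≤ 2 * ρ := haub (n + 1) t htt
      have h2 : ‖picard α B Ω₀ F (x n) t - p t‖ ≤ k * a n := hcontr n t htt
      have h3 : k * a n ≤ k * (2 * ρ) := mul_le_mul_of_nonneg_left (haB n) hknn
      calc ‖x (n + 1) t - picard α B Ω₀ F (x n) t‖
          ≤ ‖x (n + 1) t - p t‖ + ‖picard α B Ω₀ F (x n) t - p t‖ :=
            norm_sub_le₃ _ _ _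
        _ ≤ 2 * ρ + k * (2 * ρ) := by linarith
    have hbnn : 0 ≤ 2 * ρ + k * (2 * ρ) := by
      have : 0 ≤ k * (2 * ρ) := mul_nonneg hknn (by positivity)
      linarith
    have hble : ∀ n, ∀ t ∈ Icc (0:ℝ) δ,
        ‖x (n + 1) t - picard α B Ω₀ F (x n) t‖ ≤ b n :=
      fun n t htt => le_bsup' hbnn (hbub n) htt
    have hb0 : ∀ n, 0 ≤ b n := fun n =>
      (norm_nonneg _).trans (hble n 0 ⟨le_rfl, hδ.le⟩)
    have hrec : ∀ n, a (n + 1) ≤ k * a n + b n := by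
      intro n
      refine bsup_le' (by have := mul_nonneg hknn (ha0 n); linarith [hb0 n]) ?_
      intro t htt
      calc ‖x (n + 1) t - p t‖
          ≤ ‖x (n + 1) t - picard α B Ω₀ F (x n) t‖ +
            ‖p t - picard α B Ω₀ F (x n) t‖ := norm_sub_le₃ _ _ _
        _ = ‖x (n + 1) t - picard α B Ω₀ F (x n) t‖ +
            ‖picard α B Ω₀ F (x n) t - p t‖ := by rw [norm_sub_rev (p t)]
        _ ≤ b n + k * a n := add_le_add (hble n t htt) (hcontr n t htt)
        _ = k * a n + b n := by ring
    exact tendsto_rec a b k hknn hk ha0 hrec hconv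
end
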